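/- There exists a two-qubit density operator σ^{BC} such that Tr²(√(σ^B)) + Tr²(√(σ^C)) > 1 + Tr²(√(σ^{BC})), where Tr²(√σ) denotes the square of Tr(√σ). Specifically, one may take σ^{BC} with eigenvalues {87/128, 37/128, 1/32, 0} and marginals σ^B, σ^C with eigenvalues {7/8, 1/8} and {3/4, 1/4} respectively, whose existence is guaranteed by the two-qubit marginal eigenvalue conditions. -/

import Mathlib

open ComplexOrder Matrix

noncomputable def ptraceB {A B : Type*} [Fintype B] (ρ : Matrix (A × B) (A × B) ℂ) :
    Matrix A A ℂ := Matrix.of fun a a' => ∑ b, ρ (a, b) (a', b)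

noncomputable def ptraceA {A B : Type*} [Fintype A] (ρ : Matrix (A × B) (A × B) ℂ) :
    Matrix B B ℂ := Matrix.of fun b b' => ∑ a, ρ (a, b) (a, b')

noncomputable def eigMultiset {n : Type*} [Fintype n] [DecidableEq n]
    (ρ : Matrix n n ℂ) : Multiset ℝ :=
  if h : ρ.IsHermitian then Finset.univ.val.map h.eigenvalues else 0

/-- `Tr √σ`, computed via eigenvalues of a Hermitian matrix. -/
noncomputable def trSqrt {n : Type*} [Fintype n] [DecidableEq n]
    (ρ : Matrix n n ℂ) : ℝ :=
  if h : ρ.IsHermitian then ∑ j, Real.sqrt (h.eigenvalues j) else 0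

namespace Stmt8Aux

open Polynomial

noncomputable section

lemma charpoly_diagonal' {n R : Type*} [Fintype n] [DecidableEq n] [CommRing R] (d : n → R) :
    (Matrix.diagonal d).charpoly = ∏ i, (X - C (d i)) := by
  have h : charmatrix (Matrix.diagonal d) = Matrix.diagonal fun i => (X : R[X]) - C (d i) := by
    ext i j
    by_cases h : i = j
    · subst h; simp
    · simp [h, Matrix.diagonal_apply_ne _ h]
  rw [Matrix.charpoly, h, Matrix.det_diagonal]

lemma charpoly_conj' {n : Type*} [Fintype n] [DecidableEq n] (U D V : Matrix n n ℂ)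
    (h : U * V = 1) : (U * D * V).charpoly = D.charpoly := by
  have hmap : U.map C * V.map C = 1 := by
    rw [← Matrix.map_mul, h, Matrix.map_one C (map_zero C) (map_one C)]
  have hm : charmatrix (U * D * V) = U.map C * charmatrix D * V.map C := by
    unfold charmatrix
    rw [Matrix.mul_sub, Matrix.sub_mul]
    congr 1
    · rw [mul_assoc, (Matrix.scalar_commute (X : ℂ[X]) (fun r => Commute.all _ _) _).eq,
        ← mul_assoc, hmap, one_mul]
    · simp only [RingHom.mapMatrix_apply]
      rw [Matrix.map_mul, Matrix.map_mul]
  rw [Matrix.charpoly, Matrix.charpoly, hm, Matrix.det_mul, Matrix.det_mul]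
  rw [mul_comm ((U.map C).det) _, mul_assoc, ← Matrix.det_mul, hmap, Matrix.det_one, mul_one]

lemma charpoly_isHermitian {n : Type*} [Fintype n] [DecidableEq n] {A : Matrix n n ℂ}
    (hA : A.IsHermitian) : A.charpoly = ∏ i, (X - C ((hA.eigenvalues i : ℝ) : ℂ)) := by
  conv_lhs => rw [hA.spectral_theorem, Unitary.conjStarAlgAut_apply]
  rw [charpoly_conj' _ _ _ ((Matrix.mem_unitaryGroup_iff).mp (hA.eigenvectorUnitary).2),
    charpoly_diagonal']
  rfl

lemma eigMultiset_of_charpoly {n : Type*} [Fintype n] [DecidableEq n] {A : Matrix n n ℂ}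
    (hA : A.IsHermitian) (s : Multiset ℝ)
    (h : A.charpoly = (s.map fun a : ℝ => (X : ℂ[X]) - C (a : ℂ)).prod) :
    eigMultiset A = s := by
  have h2 : A.charpoly =
      (((Finset.univ.val.map hA.eigenvalues).map fun a : ℝ => ((a : ℝ) : ℂ)).map
        fun a : ℂ => (X : ℂ[X]) - C a).prod := by
    rw [charpoly_isHermitian hA, Multiset.map_map, Multiset.map_map]
    rw [Finset.prod_eq_multiset_prod]
    rfl
  have h3 : A.charpoly =
      ((s.map fun a : ℝ => ((a : ℝ) : ℂ)).map fun a : ℂ => (X : ℂ[X]) - C a).prod := by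
    rw [h, Multiset.map_map]; rfl
  have h4 := congrArg Polynomial.roots (h2.symm.trans h3)
  rw [Polynomial.roots_multiset_prod_X_sub_C, Polynomial.roots_multiset_prod_X_sub_C] at h4
  have h5 := Multiset.map_injective (f := fun a : ℝ => ((a:ℝ):ℂ)) Complex.ofReal_injective h4
  unfold eigMultiset
  rw [dif_pos hA]
  exact h5

lemma trSqrt_eq {n : Type*} [Fintype n] [DecidableEq n] {A : Matrix n n ℂ}
    (hA : A.IsHermitian) : trSqrt A = ((eigMultiset A).map Real.sqrt).sum := by
  unfold trSqrt eigMultiset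
  rw [dif_pos hA, dif_pos hA, Multiset.map_map, Finset.sum_eq_multiset_sum]
  rfl

def rc1 : ℝ := Real.sqrt 833 / 256
def rc2 : ℝ := Real.sqrt 1169 / 256

def M4 : Matrix (Fin 4) (Fin 4) ℂ :=
  !![167/256, 0, 0, (rc2:ℂ);
     0, 57/256, (rc1:ℂ), 0;
     0, (rc1:ℂ), 25/256, 0;
     (rc2:ℂ), 0, 0, 7/256]

lemma M4_herm : M4.IsHermitian := by
  rw [Matrix.IsHermitian]
  ext i j
  fin_cases i <;> fin_cases j <;>
    simp [M4, Matrix.conjTranspose_apply, Complex.conj_ofReal]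

lemma hrc1 : ((rc1 : ℝ) : ℂ) ^ 2 = 833 / 65536 := by
  rw [← Complex.ofReal_pow]
  norm_num [rc1, div_pow, Real.sq_sqrt]

lemma hrc2 : ((rc2 : ℝ) : ℂ) ^ 2 = 1169 / 65536 := by
  rw [← Complex.ofReal_pow]
  norm_num [rc2, div_pow, Real.sq_sqrt]

lemma M4_charpoly : M4.charpoly =
    (X - C ((87/128 : ℝ) : ℂ)) * ((X - C ((37/128 : ℝ) : ℂ)) *
      ((X - C ((1/32 : ℝ) : ℂ)) * (X - C ((0 : ℝ) : ℂ)))) := by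
  have hcm : charmatrix M4 =
      !![X - C (167/256 : ℂ), 0, 0, -C ((rc2:ℝ):ℂ);
         0, X - C (57/256 : ℂ), -C ((rc1:ℝ):ℂ), 0;
         0, -C ((rc1:ℝ):ℂ), X - C (25/256 : ℂ), 0;
         -C ((rc2:ℝ):ℂ), 0, 0, X - C (7/256 : ℂ)] := by
    ext i j
    fin_cases i <;> fin_cases j <;> simp [M4]
  rw [Matrix.charpoly, hcm]
  apply Polynomial.funext
  intro x
  have h1 : (Polynomial.evalRingHom x) (Matrix.det _) =
      Matrix.det ((!![X - C (167/256 : ℂ), 0, 0, -C ((rc2:ℝ):ℂ);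
         0, X - C (57/256 : ℂ), -C ((rc1:ℝ):ℂ), 0;
         0, -C ((rc1:ℝ):ℂ), X - C (25/256 : ℂ), 0;
         -C ((rc2:ℝ):ℂ), 0, 0, X - C (7/256 : ℂ)]).map (Polynomial.evalRingHom x)) :=
    RingHom.map_det _ _
  simp only [Polynomial.coe_evalRingHom] at h1
  rw [h1]
  have hc1 : ((rc1:ℝ):ℂ)^2 = 833/65536 := hrc1
  have hc2 : ((rc2:ℝ):ℂ)^2 = 1169/65536 := hrc2
  simp [Matrix.det_succ_row_zero, Fin.sum_univ_succ, Matrix.map_apply,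
    show (Fin.castSucc (0:Fin 3) : Fin 4) = 0 from rfl,
    show (Fin.castSucc (1:Fin 3) : Fin 4) = 1 from rfl,
    show (Fin.castSucc (2:Fin 3) : Fin 4) = 2 from rfl,
    show (Fin.castSucc (0:Fin 2) : Fin 3) = 0 from rfl,
    show (Fin.castSucc (1:Fin 2) : Fin 3) = 1 from rfl,
    show (Fin.castSucc (0:Fin 1) : Fin 2) = 0 from rfl,
    show (Fin.succAbove (3:Fin 4) (2:Fin 3) : Fin 4) = 2 from rfl]
  ring_nf
  linear_combination (-( (x - 167/256) * (x - 7/256) - (1169/65536 : ℂ))) * hc1 +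
    (-((x - 57/256) * (x - 25/256) - ((rc1:ℝ):ℂ)^2)) * hc2

def e4 : Fin 2 × Fin 2 ≃ Fin 4 := finProdFinEquiv

def σ0 : Matrix (Fin 2 × Fin 2) (Fin 2 × Fin 2) ℂ := Matrix.reindex e4.symm e4.symm M4

lemma σ0_herm : σ0.IsHermitian := by
  show σ0ᴴ = σ0
  unfold σ0
  rw [Matrix.reindex_apply, Matrix.conjTranspose_submatrix, M4_herm.eq]

lemma σ0_charpoly : σ0.charpoly = M4.charpoly := Matrix.charpoly_reindex _ _

lemma e00 : e4 (0,0) = 0 := by decide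
lemma ez0 : e4 0 = 0 := by decide
lemma ez1 : e4 1 = 3 := by decide
lemma e01 : e4 (0,1) = 1 := by decide
lemma e10 : e4 (1,0) = 2 := by decide
lemma e11 : e4 (1,1) = 3 := by decide

lemma σ0_apply (p q : Fin 2 × Fin 2) : σ0 p q = M4 (e4 p) (e4 q) := by
  unfold σ0
  rw [Matrix.reindex_apply, Matrix.submatrix_apply, Equiv.symm_symm]

lemma eig_σ0 : eigMultiset σ0 = {87/128, 37/128, 1/32, 0} := by
  apply eigMultiset_of_charpoly σ0_herm
  rw [σ0_charpoly, M4_charpoly]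
  simp only [Multiset.insert_eq_cons, Multiset.map_cons, Multiset.map_singleton,
    Multiset.prod_cons, Multiset.prod_singleton]

lemma σ0_posSemidef : σ0.PosSemidef := by
  apply (Matrix.IsHermitian.posSemidef_iff_eigenvalues_nonneg σ0_herm).mpr
  intro i
  have hmem : σ0_herm.eigenvalues i ∈ eigMultiset σ0 := by
    unfold eigMultiset
    rw [dif_pos σ0_herm]
    exact Multiset.mem_map_of_mem _ (Finset.mem_univ_val i)
  rw [eig_σ0] at hmem
  simp only [Multiset.insert_eq_cons, Multiset.mem_cons, Multiset.mem_singleton] at hmem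
  rcases hmem with h | h | h | h <;> rw [h] <;> norm_num

lemma σ0_trace : σ0.trace = 1 := by
  rw [Matrix.trace]
  simp only [Matrix.diag_apply]
  rw [Fintype.sum_prod_type]
  simp [Fin.sum_univ_succ, σ0_apply, e00, e01, e10, e11, ez0, ez1, M4]
  norm_num

lemma ptraceB_σ0 : ptraceB σ0 = Matrix.diagonal ![(7/8 : ℂ), 1/8] := by
  ext a a'
  fin_cases a <;> fin_cases a' <;>
    simp [ptraceB, Fin.sum_univ_succ, σ0_apply, e00, e01, e10, e11, ez0, ez1, M4,
      Matrix.diagonal] <;> norm_num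

lemma ptraceA_σ0 : ptraceA σ0 = Matrix.diagonal ![(3/4 : ℂ), 1/4] := by
  ext b b'
  fin_cases b <;> fin_cases b' <;>
    simp [ptraceA, Fin.sum_univ_succ, σ0_apply, e00, e01, e10, e11, ez0, ez1, M4,
      Matrix.diagonal] <;> norm_num

lemma diag_herm (d : Fin 2 → ℝ) : (Matrix.diagonal (fun i => ((d i : ℝ) : ℂ))).IsHermitian := by
  rw [Matrix.IsHermitian, Matrix.diagonal_conjTranspose]
  have h : (star fun i => ((d i : ℝ) : ℂ)) = fun i => ((d i : ℝ) : ℂ) := by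
    funext i
    exact Complex.conj_ofReal _
  rw [h]

lemma eig_diag2 (a b : ℝ) :
    eigMultiset (Matrix.diagonal ![(a : ℂ), (b : ℂ)]) = {a, b} := by
  have hh : (Matrix.diagonal ![(a : ℂ), (b : ℂ)]).IsHermitian := by
    have := diag_herm ![a, b]
    convert this using 2
    funext i
    fin_cases i <;> simp
  apply eigMultiset_of_charpoly hh
  rw [charpoly_diagonal']
  rw [Fin.prod_univ_succ, Fin.prod_univ_succ, Fin.prod_univ_zero]
  simp only [Multiset.insert_eq_cons, Multiset.map_cons, Multiset.map_singleton,
    Multiset.prod_cons, Multiset.prod_singleton]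
  simp

lemma eig_ptraceB : eigMultiset (ptraceB σ0) = {7/8, 1/8} := by
  rw [ptraceB_σ0]
  have := eig_diag2 (7/8) (1/8)
  convert this using 3 <;> norm_num

lemma eig_ptraceA : eigMultiset (ptraceA σ0) = {3/4, 1/4} := by
  rw [ptraceA_σ0]
  have := eig_diag2 (3/4) (1/4)
  convert this using 3 <;> norm_num

lemma trSqrt_of_eig {n : Type*} [Fintype n] [DecidableEq n] {A : Matrix n n ℂ}
    (hA : A.IsHermitian) {s : Multiset ℝ} (hs : eigMultiset A = s) :
    trSqrt A = (s.map Real.sqrt).sum := by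
  rw [trSqrt_eq hA, hs]

end

end Stmt8Aux

open Stmt8Aux in
/-- There is a two-qubit state `σ^{BC}` with spectrum `{87/128, 37/128, 1/32, 0}` and
marginal spectra `{7/8, 1/8}`, `{3/4, 1/4}` such that
`Tr²√σ^B + Tr²√σ^C > 1 + Tr²√σ^{BC}`. -/
theorem stmt8 :
    ∃ σ : Matrix (Fin 2 × Fin 2) (Fin 2 × Fin 2) ℂ,
      σ.PosSemidef ∧ σ.trace = 1 ∧
      eigMultiset σ = {87/128, 37/128, 1/32, 0} ∧
      eigMultiset (ptraceB σ) = {7/8, 1/8} ∧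
      eigMultiset (ptraceA σ) = {3/4, 1/4} ∧
      trSqrt (ptraceB σ) ^ 2 + trSqrt (ptraceA σ) ^ 2 > 1 + trSqrt σ ^ 2 := by
  refine ⟨σ0, σ0_posSemidef, σ0_trace, eig_σ0, eig_ptraceB, eig_ptraceA, ?_⟩
  have hBherm : (ptraceB σ0).IsHermitian := by
    rw [ptraceB_σ0]
    have := diag_herm ![7/8, 1/8]
    convert this using 2
    funext i; fin_cases i <;> simp <;> norm_num
  have hAherm : (ptraceA σ0).IsHermitian := by
    rw [ptraceA_σ0]
    have := diag_herm ![3/4, 1/4]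
    convert this using 2
    funext i; fin_cases i <;> simp <;> norm_num
  have hB : trSqrt (ptraceB σ0) = Real.sqrt (7/8) + Real.sqrt (1/8) := by
    rw [trSqrt_of_eig hBherm eig_ptraceB]
    simp [Multiset.insert_eq_cons]
  have hA : trSqrt (ptraceA σ0) = Real.sqrt (3/4) + Real.sqrt (1/4) := by
    rw [trSqrt_of_eig hAherm eig_ptraceA]
    simp [Multiset.insert_eq_cons]
  have hS : trSqrt σ0 = Real.sqrt (87/128) + Real.sqrt (37/128) + Real.sqrt (1/32) := by
    rw [trSqrt_of_eig σ0_herm eig_σ0]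
    simp [Multiset.insert_eq_cons]
    ring
  rw [hB, hA, hS]
  have h1 : (0.935 : ℝ) < Real.sqrt (7/8) := by
    rw [show (7/8 : ℝ) = 7/8 from rfl]
    have : (0.935 : ℝ)^2 < 7/8 := by norm_num
    nlinarith [Real.sq_sqrt (show (0:ℝ) ≤ 7/8 by norm_num),
      Real.sqrt_nonneg (7/8 : ℝ)]
  have h2 : (0.353 : ℝ) < Real.sqrt (1/8) := by
    nlinarith [Real.sq_sqrt (show (0:ℝ) ≤ 1/8 by norm_num), Real.sqrt_nonneg (1/8 : ℝ)]
  have h3 : (0.866 : ℝ) < Real.sqrt (3/4) := by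
    nlinarith [Real.sq_sqrt (show (0:ℝ) ≤ 3/4 by norm_num), Real.sqrt_nonneg (3/4 : ℝ)]
  have h4 : Real.sqrt (1/4 : ℝ) = 1/2 := by
    rw [show (1/4 : ℝ) = (1/2)^2 by norm_num, Real.sqrt_sq (by norm_num)]
  have h5 : Real.sqrt (87/128 : ℝ) < 0.825 := by
    nlinarith [Real.sq_sqrt (show (0:ℝ) ≤ 87/128 by norm_num), Real.sqrt_nonneg (87/128 : ℝ)]
  have h6 : Real.sqrt (37/128 : ℝ) < 0.538 := by
    nlinarith [Real.sq_sqrt (show (0:ℝ) ≤ 37/128 by norm_num), Real.sqrt_nonneg (37/128 : ℝ)]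
  have h7 : Real.sqrt (1/32 : ℝ) < 0.177 := by
    nlinarith [Real.sq_sqrt (show (0:ℝ) ≤ 1/32 by norm_num), Real.sqrt_nonneg (1/32 : ℝ)]
  have hn1 := Real.sqrt_nonneg (87/128 : ℝ)
  have hn2 := Real.sqrt_nonneg (37/128 : ℝ)
  have hn3 := Real.sqrt_nonneg (1/32 : ℝ)
  have hsum : Real.sqrt (87/128) + Real.sqrt (37/128) + Real.sqrt (1/32) < 1.54 := by
    linarith
  have hsq : (Real.sqrt (87/128) + Real.sqrt (37/128) + Real.sqrt (1/32))^2 < (1.54:ℝ)^2 := by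
    apply pow_lt_pow_left₀ hsum (by linarith) (by norm_num)
  have hBsq : (1.288:ℝ)^2 < (Real.sqrt (7/8) + Real.sqrt (1/8))^2 := by
    apply pow_lt_pow_left₀ (by linarith) (by norm_num) (by norm_num)
  have hAsq : (1.366:ℝ)^2 < (Real.sqrt (3/4) + Real.sqrt (1/4))^2 := by
    apply pow_lt_pow_left₀ (by rw [h4]; linarith) (by norm_num) (by norm_num)
  rw [gt_iff_lt]
  nlinarith
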